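/- Let X = {x, y, z, t} be a four-point set and define d : X × X → [0,∞) by d(p,p) = 0, d(x,z) = d(z,x) = d(y,t) = d(t,y) = 1, and d(p,q) = 2 for all other pairs of distinct points p, q. Then d is an ultrametric on X, and the ultrametric space (X,d) does not belong to the class UGVL. -/

import Mathlib

/-- `d` is an ultrametric on `X`: a nonnegative, symmetric function vanishing
exactly on the diagonal and satisfying the strong triangle inequality. -/
def IsUltrametricOn {X : Type*} (d : X → X → ℝ) : Prop :=
  (∀ x y, 0 ≤ d x y) ∧ (∀ x y, d x y = d y x) ∧
  (∀ x y, d x y = 0 ↔ x = y) ∧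
  (∀ x y z, d x y ≤ max (d x z) (d z y))

/-- `B` is an open ball of the space `(X, d)`. -/
def IsOpenBallOf {X : Type*} (d : X → X → ℝ) (B : Set X) : Prop :=
  ∃ c : X, ∃ r : ℝ, 0 < r ∧ B = {x | d c x < r}

/-- `C` is a centered sphere of the space `(X, d)`. -/
def IsCenteredSphereOf {X : Type*} (d : X → X → ℝ) (C : Set X) : Prop :=
  ∃ c ∈ C, ∃ r : ℝ, 0 ≤ r ∧ C = {x | d x c = r} ∪ {c}

/-- The diameter `sup {d x y : x, y ∈ A}` of a subset `A` of `(X, d)`. -/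
noncomputable def setDiam {X : Type*} (d : X → X → ℝ) (A : Set X) : ℝ :=
  sSup {r | ∃ x ∈ A, ∃ y ∈ A, r = d x y}

/-- A space is locally finite if all of its open balls are finite sets. -/
def IsLocallyFiniteOn {X : Type*} (d : X → X → ℝ) : Prop :=
  ∀ B : Set X, IsOpenBallOf d B → B.Finite

/-- The maximum of the (nonnegative) labels of the vertices of a walk `p`. -/
def walkMax {X : Type*} {T : SimpleGraph X} (l : X → ℝ) {u v : X} (p : T.Walk u v) : ℝ :=
  (p.support.map l).foldr max 0

/-- The function `d` is generated by the tree `T` with nonnegative vertex labeling `l`,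
i.e. `d u u = 0` and, for `u ≠ v`, `d u v` is the maximum of the labels of the vertices
on the (unique) path joining `u` and `v` in `T`. -/
def GeneratedBy {X : Type*} (d : X → X → ℝ) (T : SimpleGraph X) (l : X → ℝ) : Prop :=
  T.IsTree ∧ (∀ x, 0 ≤ l x) ∧ (∀ u, d u u = 0) ∧
  ∀ u v : X, u ≠ v → ∀ p : T.Walk u v, p.IsPath → d u v = walkMax l p

/-- `(X, d)` belongs to the class UGVL: it is generated by some labeled tree. -/
def IsUGVL {X : Type*} (d : X → X → ℝ) : Prop :=
  ∃ (T : SimpleGraph X) (l : X → ℝ), GeneratedBy d T l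

/-- The distance on the four-point set `{x, y, z, t} = Fin 4` with
`d(x,z) = d(y,t) = 1` and all other distances between distinct points equal to `2`. -/
noncomputable def dFour : Fin 4 → Fin 4 → ℝ := fun p q =>
  if p = q then 0
  else if (p = 0 ∧ q = 2) ∨ (p = 2 ∧ q = 0) ∨ (p = 1 ∧ q = 3) ∨ (p = 3 ∧ q = 1) then 1
  else 2

lemma le_foldr_max {a : ℝ} {L : List ℝ} (h : a ∈ L) : a ≤ L.foldr max 0 := by
  induction L with
  | nil => simp at h
  | cons b t ih =>
    rcases List.mem_cons.mp h with rfl | h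
    · exact le_max_left _ _
    · exact le_trans (ih h) (le_max_right _ _)

lemma foldr_max_le {c : ℝ} (hc : 0 ≤ c) {L : List ℝ} (h : ∀ a ∈ L, a ≤ c) :
    L.foldr max 0 ≤ c := by
  induction L with
  | nil => simpa
  | cons b t ih =>
    simp only [List.foldr]
    exact max_le (h b List.mem_cons_self) (ih fun a ha => h a (List.mem_cons_of_mem b ha))

lemma label_le {T : SimpleGraph (Fin 4)} {l : Fin 4 → ℝ}
    (h : GeneratedBy dFour T l) {v w : Fin 4} (hne : v ≠ w) (hd : dFour v w = 1) :
    l v ≤ 1 := by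
  obtain ⟨hT, hl, hdiag, hgen⟩ := h
  obtain ⟨q⟩ := hT.isConnected.preconnected v w
  have hpath := q.bypass_isPath
  have heq := hgen v w hne q.bypass hpath
  have hmem : l v ∈ q.bypass.support.map l :=
    List.mem_map_of_mem q.bypass.start_mem_support
  have hle := le_foldr_max hmem
  unfold walkMax at heq
  rw [hd] at heq
  rw [← heq] at hle
  exact hle

/-- `dFour` is an ultrametric on the four-point set, and the resulting ultrametric
space does not belong to the class UGVL. -/
theorem stmt_11 : IsUltrametricOn dFour ∧ ¬ IsUGVL dFour := by
  constructor
  · refine ⟨?_, ?_, ?_, ?_⟩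
    · intro x y; fin_cases x <;> fin_cases y <;> norm_num [dFour, Fin.ext_iff, show ((3:Fin 4):ℕ) = 3 from rfl]
    · intro x y; fin_cases x <;> fin_cases y <;> norm_num [dFour, Fin.ext_iff, show ((3:Fin 4):ℕ) = 3 from rfl]
    · intro x y; fin_cases x <;> fin_cases y <;> norm_num [dFour, Fin.ext_iff, show ((3:Fin 4):ℕ) = 3 from rfl]
    · intro x y z; fin_cases x <;> fin_cases y <;> fin_cases z <;> norm_num [dFour, Fin.ext_iff, show ((3:Fin 4):ℕ) = 3 from rfl]
  · rintro ⟨T, l, hgen⟩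
    have h0 : l 0 ≤ 1 := label_le hgen (v := 0) (w := 2) (by decide) (by norm_num [dFour, Fin.ext_iff])
    have h1 : l 1 ≤ 1 := label_le hgen (v := 1) (w := 3) (by decide) (by norm_num [dFour, Fin.ext_iff, show ((3:Fin 4):ℕ) = 3 from rfl])
    have h2 : l 2 ≤ 1 := label_le hgen (v := 2) (w := 0) (by decide) (by norm_num [dFour, Fin.ext_iff])
    have h3 : l 3 ≤ 1 := label_le hgen (v := 3) (w := 1) (by decide) (by norm_num [dFour, Fin.ext_iff, show ((3:Fin 4):ℕ) = 3 from rfl])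
    have hall : ∀ v : Fin 4, l v ≤ 1 := by
      intro v; fin_cases v <;> assumption
    obtain ⟨hT, hl, hdiag, hg⟩ := hgen
    obtain ⟨q⟩ := hT.isConnected.preconnected 0 1
    have heq := hg 0 1 (by decide) q.bypass q.bypass_isPath
    have hle : walkMax l q.bypass ≤ 1 := by
      apply foldr_max_le zero_le_one
      intro a ha
      obtain ⟨v, _, rfl⟩ := List.mem_map.mp ha
      exact hall v
    have h2 : dFour 0 1 = 2 := by norm_num [dFour, Fin.ext_iff, show ((3:Fin 4):ℕ) = 3 from rfl]
    rw [h2] at heq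
    rw [← heq] at hle
    linarith
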